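/- Assume every nonzero element of D is invertible (D is a division algebra). Then the set {(x,y) ∈ D × D : (x,y) ≠ (0,0) and x·star(y) = y·star(x)} is exactly one G-orbit, namely the G-orbit of (0, 1). -/

import Mathlib

open Matrix Quaternion

/-- The right action of `G = Dˣ × Dˣ × GL₂(F)` on `D × D` for the quaternion algebra
`D = ℍ[F, c₁, c₂]`:
`(x,y)·(g₁,g₂,g₃) := (a·g₁⁻¹xg₂ + c·g₁⁻¹yg₂, b·g₁⁻¹xg₂ + d·g₁⁻¹yg₂)` where
`g₃ = [[a,b],[c,d]]`. -/
noncomputable def actD {F : Type*} [Field F] {c₁ c₂ : F}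
    (v : ℍ[F, c₁, c₂] × ℍ[F, c₁, c₂])
    (g : ℍ[F, c₁, c₂]ˣ × ℍ[F, c₁, c₂]ˣ × GL (Fin 2) F) :
    ℍ[F, c₁, c₂] × ℍ[F, c₁, c₂] :=
  (((g.2.2 : Matrix (Fin 2) (Fin 2) F) 0 0) • ((g.1⁻¹ : ℍ[F, c₁, c₂]ˣ) * v.1 * g.2.1) +
     ((g.2.2 : Matrix (Fin 2) (Fin 2) F) 1 0) • ((g.1⁻¹ : ℍ[F, c₁, c₂]ˣ) * v.2 * g.2.1),
   ((g.2.2 : Matrix (Fin 2) (Fin 2) F) 0 1) • ((g.1⁻¹ : ℍ[F, c₁, c₂]ˣ) * v.1 * g.2.1) +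
     ((g.2.2 : Matrix (Fin 2) (Fin 2) F) 1 1) • ((g.1⁻¹ : ℍ[F, c₁, c₂]ˣ) * v.2 * g.2.1))

/-- A self-conjugate quaternion is a scalar (char ≠ 2). -/
lemma selfConj_eq_coe_re {F : Type*} [Field F] (h2 : (2 : F) ≠ 0) {c₁ c₂ : F}
    {a : ℍ[F, c₁, c₂]} (h : star a = a) : a = ((a.re : F) : ℍ[F, c₁, c₂]) := by
  have key : ∀ x : F, -x = x → x = 0 := by
    intro x hx
    have : 2 * x = 0 := by rw [two_mul]; linear_combination -hx
    rcases mul_eq_zero.mp this with h' | h'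
    · exact absurd h' h2
    · exact h'
  have hI : a.imI = 0 := key _ (congrArg QuaternionAlgebra.imI h)
  have hJ : a.imJ = 0 := key _ (congrArg QuaternionAlgebra.imJ h)
  have hK : a.imK = 0 := key _ (congrArg QuaternionAlgebra.imK h)
  ext <;> simp [hI, hJ, hK]

/-- The unipotent lower-triangular matrix as an element of GL₂. -/
noncomputable def lowGL {F : Type*} [Field F] (c : F) : GL (Fin 2) F :=
  ⟨!![1, 0; c, 1], !![1, 0; -c, 1],
    by rw [Matrix.mul_fin_two]; simp [Matrix.one_fin_two],
    by rw [Matrix.mul_fin_two]; simp [Matrix.one_fin_two]⟩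

/-- The swap matrix as an element of GL₂. -/
noncomputable def swapGL (F : Type*) [Field F] : GL (Fin 2) F :=
  ⟨!![0, 1; 1, 0], !![0, 1; 1, 0],
    by rw [Matrix.mul_fin_two]; simp [Matrix.one_fin_two],
    by rw [Matrix.mul_fin_two]; simp [Matrix.one_fin_two]⟩

/-- if `D = ℍ[F, c₁, c₂]` is a division algebra, then the set of nonzero
pairs `(x,y)` with `x·star y = y·star x` is exactly the `G`-orbit of `(0, 1)`. -/
theorem stmt4 {F : Type*} [Field F] (h2 : (2 : F) ≠ 0) (c₁ c₂ : F)
    (hdiv : ∀ x : ℍ[F, c₁, c₂], x ≠ 0 → IsUnit x) :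
    {v : ℍ[F, c₁, c₂] × ℍ[F, c₁, c₂] |
        v ≠ (0, 0) ∧ v.1 * star v.2 = v.2 * star v.1} =
      {w | ∃ g : ℍ[F, c₁, c₂]ˣ × ℍ[F, c₁, c₂]ˣ × GL (Fin 2) F,
        actD ((0 : ℍ[F, c₁, c₂]), (1 : ℍ[F, c₁, c₂])) g = w} := by
  ext v
  simp only [Set.mem_setOf_eq]
  constructor
  · rintro ⟨hne, hcomm⟩
    by_cases hy : v.2 = 0
    · -- v.1 ≠ 0, use swap matrix
      have hx : v.1 ≠ 0 := by
        intro hx0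
        exact hne (Prod.ext hx0 hy)
      obtain ⟨u, hu⟩ := hdiv v.1 hx
      refine ⟨⟨1, u, swapGL F⟩, ?_⟩
      simp [actD, swapGL, hu, hy, Prod.ext_iff]
    · obtain ⟨u, hu⟩ := hdiv v.2 hy
      -- a := v.1 * star v.2 is self-conjugate
      set a : ℍ[F, c₁, c₂] := v.1 * star v.2 with ha
      have hsa : star a = a := by
        rw [ha, StarMul.star_mul, star_star, ← hcomm]
      have haco : a = ((a.re : F) : ℍ[F, c₁, c₂]) := selfConj_eq_coe_re h2 hsa
      -- n := star v.2 * v.2 is a nonzero scalar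
      set b : ℍ[F, c₁, c₂] := star v.2 * v.2 with hb
      have hsb : star b = b := by rw [hb, StarMul.star_mul, star_star]
      have hbco : b = ((b.re : F) : ℍ[F, c₁, c₂]) := selfConj_eq_coe_re h2 hsb
      have hbne : b.re ≠ 0 := by
        intro h0
        have : star v.2 * v.2 = 0 := by rw [← hb, hbco, h0]; simp
        have : star v.2 = 0 := by
          have := congrArg (· * (↑u⁻¹ : ℍ[F, c₁, c₂])) this
          simpa [mul_assoc, ← hu, Units.mul_inv] using this
        have : v.2 = 0 := by simpa using congrArg star this
        exact hy this
      -- v.1 = (a.re / b.re) • v.2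
      have hkey : b.re • v.1 = a.re • v.2 := by
        have h1 : v.1 * b = a * v.2 := by rw [hb, ha, mul_assoc]
        rw [hbco] at h1
        rw [haco] at h1
        rwa [QuaternionAlgebra.mul_coe_eq_smul, QuaternionAlgebra.coe_mul_eq_smul] at h1
      have hx1 : v.1 = (a.re / b.re) • v.2 := by
        rw [div_eq_inv_mul, mul_smul, ← hkey, inv_smul_smul₀ hbne]
      refine ⟨⟨1, u, lowGL (a.re / b.re)⟩, ?_⟩
      simp [actD, lowGL, hu, Prod.ext_iff, hx1]
  · rintro ⟨g, rfl⟩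
    set c : F := (g.2.2 : Matrix (Fin 2) (Fin 2) F) 1 0 with hc
    set d : F := (g.2.2 : Matrix (Fin 2) (Fin 2) F) 1 1 with hd
    set uD : ℍ[F, c₁, c₂] := (g.1⁻¹ : ℍ[F, c₁, c₂]ˣ) * g.2.1 with hu
    have huunit : IsUnit uD := by
      rw [hu]; exact (g.1⁻¹).isUnit.mul g.2.1.isUnit
    have huD : uD ≠ 0 := huunit.ne_zero
    have hact : actD ((0 : ℍ[F, c₁, c₂]), (1 : ℍ[F, c₁, c₂])) g = (c • uD, d • uD) := by
      simp only [actD, mul_zero, zero_mul, mul_one, smul_zero, zero_add, add_zero]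
      rfl
    rw [hact]
    constructor
    · intro h0
      rw [Prod.ext_iff] at h0
      have hc0 : c = 0 := by
        rcases smul_eq_zero.mp h0.1 with h | h
        · exact h
        · exact absurd h huD
      have hd0 : d = 0 := by
        rcases smul_eq_zero.mp h0.2 with h | h
        · exact h
        · exact absurd h huD
      have hdet : (g.2.2 : Matrix (Fin 2) (Fin 2) F).det = 0 := by
        rw [Matrix.det_fin_two, ← hc, ← hd, hc0, hd0]; ring
      have : IsUnit (g.2.2 : Matrix (Fin 2) (Fin 2) F).det :=
        (Matrix.isUnit_iff_isUnit_det _).mp g.2.2.isUnit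
      rw [hdet] at this
      exact this.ne_zero rfl
    · simp only [QuaternionAlgebra.star_smul, smul_mul_assoc, mul_smul_comm, smul_smul]
      rw [mul_comm c d]
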